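/- Let q ≥ 4 be even and h = (q−2)/2. Then the Möbius transformation (S·T)^{h−1} · S·T² fixes the point r = 1 − λ, i.e. ((S·T)^{h−1} S T²)·(1−λ) = 1−λ. -/

import Mathlib

open Matrix Real

lemma pow_ST (θ : ℝ) :
    ∀ n : ℕ, Real.sin θ • (!![0, -1; 1, 2 * Real.cos θ] : Matrix (Fin 2) (Fin 2) ℝ) ^ n =
      !![-Real.sin (((n:ℝ) - 1) * θ), -Real.sin ((n:ℝ) * θ);
         Real.sin ((n:ℝ) * θ), Real.sin (((n:ℝ) + 1) * θ)] := by
  intro n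
  induction n with
  | zero =>
      ext i j
      fin_cases i <;> fin_cases j <;>
        simp [Matrix.one_apply, Real.sin_neg]
  | succ n ih =>
      rw [pow_succ, ← Matrix.smul_mul, ih]
      ext i j
      fin_cases i <;> fin_cases j <;>
        simp [Matrix.mul_apply, Fin.sum_univ_two]
      · rw [show ((n:ℝ)+1)*θ = n*θ + θ by ring, show ((n:ℝ)-1)*θ = n*θ - θ by ring,
          Real.sin_add, Real.sin_sub]
        ring
      · simp only [show ((n:ℝ)+1+1)*θ = ((n:ℝ)*θ+θ)+θ by ring,
          show ((n:ℝ)+1)*θ = (n:ℝ)*θ+θ by ring, Real.sin_add, Real.cos_add]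
        linear_combination (Real.sin ((n:ℝ)*θ)) * (Real.sin_sq_add_cos_sq θ)

/-- The Möbius action of a real 2×2 matrix on ℝ. -/
noncomputable def moeb (A : Matrix (Fin 2) (Fin 2) ℝ) (x : ℝ) : ℝ :=
  (A 0 0 * x + A 0 1) / (A 1 0 * x + A 1 1)

/-- Let q ≥ 4 be even and h = (q−2)/2. Then the Möbius transformation
(S·T)^{h−1} · S·T² fixes r = 1 − λ. -/
theorem r_fixed_even (q : ℕ) (hq : 4 ≤ q) (hqe : Even q)
    (lam : ℝ) (hlam : lam = 2 * Real.cos (Real.pi / q))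
    (S T : Matrix (Fin 2) (Fin 2) ℝ)
    (hS : S = !![0, -1; 1, 0]) (hT : T = !![1, lam; 0, 1])
    (h : ℕ) (hh : h = (q - 2) / 2) :
    moeb ((S * T) ^ (h - 1) * (S * T ^ 2)) (1 - lam) = 1 - lam := by
  obtain ⟨k, hk⟩ := hqe
  set θ : ℝ := Real.pi / q with hθ
  have hk2 : 2 ≤ k := by omega
  have hq0 : 0 < (q : ℝ) := by positivity
  have hπ := Real.pi_pos
  -- bounds on θ
  have hθpos : 0 < θ := by positivity
  have hθle : θ ≤ Real.pi / 4 := by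
    rw [hθ]
    gcongr
    exact_mod_cast hq
  have hθlt : θ < Real.pi / 2 := by linarith
  have hsin : Real.sin θ ≠ 0 :=
    ne_of_gt (Real.sin_pos_of_pos_of_lt_pi hθpos (by linarith))
  have hcos : 0 < Real.cos θ := Real.cos_pos_of_mem_Ioo ⟨by linarith, hθlt⟩
  have hlamc : lam = 2 * Real.cos θ := hlam
  -- (k:ℝ) * θ = π/2
  have hkR : (q : ℝ) = 2 * k := by push_cast [hk]; ring
  have hk0 : ((k : ℝ)) ≠ 0 := by positivity
  have hkθ : (k : ℝ) * θ = Real.pi / 2 := by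
    rw [hθ, hkR]; field_simp
  -- cast of h - 1
  have hcast : (((h - 1 : ℕ)) : ℝ) = (k : ℝ) - 2 := by
    have : h - 1 = k - 2 := by omega
    rw [this, Nat.cast_sub hk2]; norm_num
  -- S*T and S*T^2
  have hST : S * T = !![0, -1; 1, 2 * Real.cos θ] := by
    subst hS hT
    rw [hlamc]
    ext i j
    fin_cases i <;> fin_cases j <;> simp [Matrix.mul_apply, Fin.sum_univ_two]
  have hST2 : S * T ^ 2 = !![0, -1; 1, 2 * lam] := by
    subst hS hT
    ext i j
    fin_cases i <;> fin_cases j <;>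
      simp [pow_two, Matrix.mul_apply, Fin.sum_univ_two] <;> ring
  -- the scaled power
  have e1 : (((h - 1 : ℕ) : ℝ) - 1) * θ = Real.pi / 2 - 3 * θ := by
    rw [hcast, show ((k : ℝ) - 2 - 1) * θ = (k : ℝ) * θ - 3 * θ by ring, hkθ]
  have e2 : ((h - 1 : ℕ) : ℝ) * θ = Real.pi / 2 - 2 * θ := by
    rw [hcast, show ((k : ℝ) - 2) * θ = (k : ℝ) * θ - 2 * θ by ring, hkθ]
  have e3 : (((h - 1 : ℕ) : ℝ) + 1) * θ = Real.pi / 2 - θ := by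
    rw [hcast, show ((k : ℝ) - 2 + 1) * θ = (k : ℝ) * θ - θ by ring, hkθ]
  have hAcos : Real.sin θ • (S * T) ^ (h - 1) =
      !![-Real.cos (3 * θ), -Real.cos (2 * θ);
         Real.cos (2 * θ), Real.cos θ] := by
    rw [hST, pow_ST θ (h - 1), e1, e2, e3, Real.sin_pi_div_two_sub,
      Real.sin_pi_div_two_sub, Real.sin_pi_div_two_sub]
  set M := (S * T) ^ (h - 1) * (S * T ^ 2) with hM
  have hB : Real.sin θ • M =
      !![-Real.cos (2 * θ), Real.cos (3 * θ) - 2 * lam * Real.cos (2 * θ);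
         Real.cos θ, -Real.cos (2 * θ) + 2 * lam * Real.cos θ] := by
    rw [hM, ← Matrix.smul_mul, hAcos, hST2]
    ext i j
    fin_cases i <;> fin_cases j <;>
      simp [Matrix.mul_apply, Fin.sum_univ_two] <;> ring
  have b00 : Real.sin θ * M 0 0 = -Real.cos (2 * θ) := by
    have := congrFun (congrFun hB 0) 0; simpa using this
  have b01 : Real.sin θ * M 0 1 = Real.cos (3 * θ) - 2 * lam * Real.cos (2 * θ) := by
    have := congrFun (congrFun hB 0) 1; simpa using this
  have b10 : Real.sin θ * M 1 0 = Real.cos θ := by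
    have := congrFun (congrFun hB 1) 0; simpa using this
  have b11 : Real.sin θ * M 1 1 = -Real.cos (2 * θ) + 2 * lam * Real.cos θ := by
    have := congrFun (congrFun hB 1) 1; simpa using this
  have h2 : Real.cos (2 * θ) = 2 * Real.cos θ ^ 2 - 1 := by
    rw [Real.cos_two_mul]
  have h3 : Real.cos (3 * θ) = 4 * Real.cos θ ^ 3 - 3 * Real.cos θ := Real.cos_three_mul θ
  have hnum : Real.sin θ * (M 0 0 * (1 - lam) + M 0 1) = (1 - lam) * (1 + Real.cos θ) := by
    have : Real.sin θ * (M 0 0 * (1 - lam) + M 0 1)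
        = (Real.sin θ * M 0 0) * (1 - lam) + Real.sin θ * M 0 1 := by ring
    rw [this, b00, b01, h2, h3, hlamc]; ring
  have hden : Real.sin θ * (M 1 0 * (1 - lam) + M 1 1) = 1 + Real.cos θ := by
    have : Real.sin θ * (M 1 0 * (1 - lam) + M 1 1)
        = (Real.sin θ * M 1 0) * (1 - lam) + Real.sin θ * M 1 1 := by ring
    rw [this, b10, b11, h2, hlamc]; ring
  have hcne : (1 : ℝ) + Real.cos θ ≠ 0 := by positivity
  unfold moeb
  rw [← mul_div_mul_left (M 0 0 * (1 - lam) + M 0 1) (M 1 0 * (1 - lam) + M 1 1) hsin,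
    hnum, hden, mul_div_assoc, div_self hcne, mul_one]
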